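/- Exactly 20 of the 28 non-adjacent unordered vertex pairs of G_Q are not a diagonal of any 4-belt of G_Q. -/

import Mathlib

/-- Edge list of the facet-intersection graph `G_Q` of the polytope `𝒬`
(vertices: a=0, b=1, c=2, d=3, e=4, f=5, g=6, h=7, i=8, j=9, k=10). -/
def qEdgeList : List (Fin 11 × Fin 11) :=
  [(0,1),(0,2),(0,3),(0,4),(0,5),(1,2),(1,5),(1,6),(2,3),(2,6),(2,7),(2,8),
   (3,4),(3,8),(3,9),(4,5),(4,9),(5,6),(5,9),(5,10),(6,7),(6,10),(7,8),(7,9),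
   (7,10),(8,9),(9,10)]

/-- The facet-intersection graph `G_Q` of the polytope `𝒬`. -/
def G_Q : SimpleGraph (Fin 11) where
  Adj u v := (u, v) ∈ qEdgeList ∨ (v, u) ∈ qEdgeList
  symm := ⟨fun u v h => h.symm⟩
  loopless := ⟨by intro v; fin_cases v <;> decide⟩

instance : DecidableRel G_Q.Adj :=
  fun u v => inferInstanceAs (Decidable ((u, v) ∈ qEdgeList ∨ (v, u) ∈ qEdgeList))

/-- A 4-belt of a simple graph `G` is a 4-element vertex set that can be written as
`{w, x, y, z}` where `wx`, `xy`, `yz`, `zw` are edges of `G` while `wy`, `xz` are not. -/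
def IsFourBelt {V : Type*} (G : SimpleGraph V) (B : Set V) : Prop :=
  ∃ w x y z : V, B = {w, x, y, z} ∧ B.ncard = 4 ∧
    G.Adj w x ∧ G.Adj x y ∧ G.Adj y z ∧ G.Adj z w ∧ ¬ G.Adj w y ∧ ¬ G.Adj x z

/-- The pair `{u, v}` is a diagonal of the 4-belt `B` of `G`. -/
def IsDiagonalOfBelt {V : Type*} (G : SimpleGraph V) (u v : V) (B : Set V) : Prop :=
  ∃ w x y z : V, B = {w, x, y, z} ∧ B.ncard = 4 ∧
    G.Adj w x ∧ G.Adj x y ∧ G.Adj y z ∧ G.Adj z w ∧ ¬ G.Adj w y ∧ ¬ G.Adj x z ∧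
    (({u, v} : Set V) = {w, y} ∨ ({u, v} : Set V) = {x, z})

/-- The pair `{u, v}` is a diagonal of some 4-belt of `G`. -/
def IsBeltDiagonal {V : Type*} (G : SimpleGraph V) (u v : V) : Prop :=
  ∃ B : Set V, IsDiagonalOfBelt G u v B

/-- Decidable version of `IsBeltDiagonal` for `G_Q`. -/
def bd (u v : Fin 11) : Prop :=
  ∃ x z : Fin 11, ({u, x, v, z} : Finset (Fin 11)).card = 4 ∧
    G_Q.Adj u x ∧ G_Q.Adj x v ∧ G_Q.Adj v z ∧ G_Q.Adj z u ∧
    ¬ G_Q.Adj u v ∧ ¬ G_Q.Adj x z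

instance : DecidablePred fun q : Fin 11 × Fin 11 => bd q.1 q.2 := by
  unfold bd; infer_instance

lemma ncard_quad (a b c d : Fin 11) :
    ({a, b, c, d} : Set (Fin 11)).ncard = ({a, b, c, d} : Finset (Fin 11)).card := by
  rw [← Set.ncard_coe_finset]
  congr 1
  simp

lemma set_quad_comm {V : Type*} (a b c d : V) :
    ({a, b, c, d} : Set V) = ({c, d, a, b} : Set V) := by
  ext x
  simp only [Set.mem_insert_iff, Set.mem_singleton_iff]
  tauto

lemma set_quad_rot {V : Type*} (a b c d : V) :
    ({a, b, c, d} : Set V) = ({b, c, d, a} : Set V) := by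
  ext x
  simp only [Set.mem_insert_iff, Set.mem_singleton_iff]
  tauto

lemma beltDiagonal_iff_bd (u v : Fin 11) : IsBeltDiagonal G_Q u v ↔ bd u v := by
  constructor
  · rintro ⟨B, w, x, y, z, hB, hcard, hwx, hxy, hyz, hzw, hwy, hxz, hdiag⟩
    rw [hB] at hcard
    rcases hdiag with h | h
    · rcases Set.pair_eq_pair_iff.mp h with ⟨rfl, rfl⟩ | ⟨rfl, rfl⟩
      · exact ⟨x, z, by rwa [← ncard_quad], hwx, hxy, hyz, hzw, hwy, hxz⟩
      · refine ⟨z, x, ?_, hyz, hzw, hwx, hxy, fun h => hwy h.symm, fun h => hxz h.symm⟩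
        rw [← ncard_quad]
        rw [show ({u, z, v, x} : Set (Fin 11)) = {v, x, u, z} from set_quad_comm u z v x]
        exact hcard
    · rcases Set.pair_eq_pair_iff.mp h with ⟨rfl, rfl⟩ | ⟨rfl, rfl⟩
      · refine ⟨y, w, ?_, hxy, hyz, hzw, hwx, hxz, fun h => hwy h.symm⟩
        rw [← ncard_quad]
        rw [show ({u, y, v, w} : Set (Fin 11)) = {w, u, y, v} from
          (set_quad_rot w u y v).symm]
        exact hcard
      · refine ⟨w, y, ?_, hzw, hwx, hxy, hyz, fun h => hxz h.symm, hwy⟩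
        rw [← ncard_quad, set_quad_rot u w v y]
        exact hcard
  · rintro ⟨x, z, hcard, h1, h2, h3, h4, h5, h6⟩
    exact ⟨{u, x, v, z}, u, x, v, z, rfl, by rw [ncard_quad]; exact hcard,
      h1, h2, h3, h4, h5, h6, Or.inl rfl⟩

def goodPairs : Finset (Fin 11 × Fin 11) :=
  Finset.univ.filter fun q => q.1 ≠ q.2 ∧ ¬ G_Q.Adj q.1 q.2 ∧ ¬ bd q.1 q.2

def goodSets : Finset (Finset (Fin 11)) :=
  goodPairs.image fun q => {q.1, q.2}

/-- Exactly 20 of the 28 non-adjacent unordered vertex pairs of `G_Q` are not a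
diagonal of any 4-belt of `G_Q`. -/
theorem stmt_9 :
    {p : Set (Fin 11) | ∃ u v : Fin 11, u ≠ v ∧ ¬ G_Q.Adj u v ∧
        ¬ IsBeltDiagonal G_Q u v ∧ p = {u, v}}.ncard = 20 := by
  have hset : {p : Set (Fin 11) | ∃ u v : Fin 11, u ≠ v ∧ ¬ G_Q.Adj u v ∧
      ¬ IsBeltDiagonal G_Q u v ∧ p = {u, v}} =
      (fun s : Finset (Fin 11) => (↑s : Set (Fin 11))) '' ↑goodSets := by
    ext p
    simp only [Set.mem_setOf_eq, Set.mem_image, Finset.mem_coe, goodSets,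
      Finset.mem_image, goodPairs, Finset.mem_filter, Finset.mem_univ, true_and]
    constructor
    · rintro ⟨u, v, h1, h2, h3, rfl⟩
      exact ⟨{u, v}, ⟨(u, v), ⟨h1, h2, (beltDiagonal_iff_bd u v).not.mp h3⟩, rfl⟩, by simp⟩
    · rintro ⟨s, ⟨⟨u, v⟩, ⟨h1, h2, h3⟩, rfl⟩, rfl⟩
      exact ⟨u, v, h1, h2, (beltDiagonal_iff_bd u v).not.mpr h3, by simp⟩
  rw [hset, Set.ncard_image_of_injective _ Finset.coe_injective, Set.ncard_coe_finset]
  decide
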